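/- arXiv:1609.05263 — 2 statements merged into one kernel-verified Lean document; each statement's English description precedes it below -/
import Mathlib

section
/- Define tH_KSs^{2+3/2}(α,β,γ; t; q₁,p₁,q₂,p₂) = tH_{III(D7)}(α;t;q₁,p₁) + tH_{III(D7)}(β;t;q₂,p₂) + 2p₂q₁(p₁q₁+γ) − q₁, and tH_KSs^{2+4/3}(α,β; t; q₁,p₁,q₂,p₂) = tH_{III(D7)}(α;t;q₁,p₁) + tH_{III(D7)}(β;t;q₂,p₂) − t(2p₁p₂+p₁+p₂), where tH_{III(D7)}(a;t;q,p) = p²q² + aqp + tp + q. Then under the substitution q₁ = ε t̃ p̃₁, p₁ = −q̃₁/(ε t̃), q₂ = q̃₂, p₂ = p̃₂, t = −ε t̃, the limit lim_{ε→0} [ t·H_KSs^{2+3/2}(α, β, γ − ε⁻¹; t; q₁,p₁,q₂,p₂) + p̃₁q̃₁ ] exists and equals t̃·H_KSs^{2+4/3}(1−α, β; t̃; q̃₁,p̃₁,q̃₂,p̃₂). -/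
/-- `t·H_{III(D7)}(a;t;q,p) = p²q² + aqp + tp + q`. -/
def tHIIID7 (a t q p : ℂ) : ℂ := p ^ 2 * q ^ 2 + a * q * p + t * p + q

/-- `t·H_KSs^{2+3/2}(α,β,γ;t;q₁,p₁,q₂,p₂)`. -/
def tHKSs_2_32 (α β γ t q1 p1 q2 p2 : ℂ) : ℂ :=
  tHIIID7 α t q1 p1 + tHIIID7 β t q2 p2 + 2 * p2 * q1 * (p1 * q1 + γ) - q1

/-- `t·H_KSs^{2+4/3}(α,β;t;q₁,p₁,q₂,p₂)`. -/
def tHKSs_2_43 (α β t q1 p1 q2 p2 : ℂ) : ℂ :=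
  tHIIID7 α t q1 p1 + tHIIID7 β t q2 p2 - t * (2 * p1 * p2 + p1 + p2)

/-- Degeneration `2+3/2 → 2+4/3`: under `q₁ = εt̃p̃₁`, `p₁ = −q̃₁/(εt̃)`, `q₂ = q̃₂`,
`p₂ = p̃₂`, `t = −εt̃`, `γ ↦ γ − ε⁻¹`, the quantity `t·H_KSs^{2+3/2} + p̃₁q̃₁` tends, as
`ε → 0`, to `t̃·H_KSs^{2+4/3}(1−α, β; t̃; q̃₁,p̃₁,q̃₂,p̃₂)`. -/
theorem degeneration_2_32_to_2_43 (α β γ tt q1 p1 q2 p2 : ℂ) (htt : tt ≠ 0) :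
    Filter.Tendsto
      (fun ε : ℂ =>
        tHKSs_2_32 α β (γ - ε⁻¹) (-(ε * tt)) (ε * tt * p1) (-(q1 / (ε * tt))) q2 p2
          + p1 * q1)
      (nhdsWithin 0 {ε : ℂ | ε ≠ 0})
      (nhds (tHKSs_2_43 (1 - α) β tt q1 p1 q2 p2)) := by
  set L := tHKSs_2_43 (1 - α) β tt q1 p1 q2 p2 with hL
  set D : ℂ := tt * (2 * p1 * p2 * (γ - p1 * q1) - p2) with hD
  have key : Filter.Tendsto (fun ε : ℂ => L + ε * D)
      (nhdsWithin 0 {ε : ℂ | ε ≠ 0}) (nhds L) := by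
    have h : Filter.Tendsto (fun ε : ℂ => L + ε * D) (nhds 0) (nhds L) := by
      have hc : Continuous (fun ε : ℂ => L + ε * D) :=
        continuous_const.add (continuous_id.mul continuous_const)
      simpa using hc.tendsto (0 : ℂ)
    exact h.mono_left nhdsWithin_le_nhds
  refine key.congr' ?_
  filter_upwards [self_mem_nhdsWithin] with ε (hε : ε ≠ 0)
  have hεt : ε * tt ≠ 0 := mul_ne_zero hε htt
  simp only [hL, hD, tHKSs_2_32, tHKSs_2_43, tHIIID7]
  field_simp
  ring
end

section
/- With H₁ and H₂ as in the degenerate Garnier system of type 5/2+1+1, namely H₁ = p₁² − (q₁²+t₁)p₁ + θ₁q₁ + p₁p₂ + K/(t₁−t₂) and H₂ = p₂² − (q₂²+t₂)p₂ + θ₂q₂ + p₁p₂ + K/(t₂−t₁), where K = (p₁(q₁−q₂) − θ₁)(p₂(q₂−q₁) − θ₂), the canonical Poisson bracket vanishes identically: {H₁, H₂} = 0, where {F,G} = Σᵢ (∂F/∂qᵢ ∂G/∂pᵢ − ∂F/∂pᵢ ∂G/∂qᵢ). -/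
lemma deriv_hsub (c x : ℂ) : deriv (HSub.hSub c) x = -1 := by
  simpa using deriv_const_sub (f := fun y : ℂ => y) (x := x) c
lemma deriv_hmul (a x : ℂ) : deriv (HMul.hMul a) x = a := by
  simpa using deriv_const_mul_field (v := fun y : ℂ => y) (x := x) a

/-- Partial derivative of `F : ℂ⁴ → ℂ` in the `i`-th coordinate. -/
noncomputable def pderiv4 (F : (Fin 4 → ℂ) → ℂ) (i : Fin 4) (v : Fin 4 → ℂ) : ℂ :=
  deriv (fun s => F (Function.update v i s)) (v i)

/-- Canonical Poisson bracket on `ℂ⁴` with coordinates `(q₁, p₁, q₂, p₂)`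
(`q₁ = v 0`, `p₁ = v 1`, `q₂ = v 2`, `p₂ = v 3`):
`{F,G} = Σᵢ (∂F/∂qᵢ ∂G/∂pᵢ − ∂F/∂pᵢ ∂G/∂qᵢ)`. -/
noncomputable def poissonBracket (F G : (Fin 4 → ℂ) → ℂ) (v : Fin 4 → ℂ) : ℂ :=
  pderiv4 F 0 v * pderiv4 G 1 v - pderiv4 F 1 v * pderiv4 G 0 v
    + pderiv4 F 2 v * pderiv4 G 3 v - pderiv4 F 3 v * pderiv4 G 2 v

/-- The two Hamiltonians of the degenerate Garnier system of type `5/2+1+1`,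
`H₁ = p₁² − (q₁²+t₁)p₁ + θ₁q₁ + p₁p₂ + K/(t₁−t₂)` and
`H₂ = p₂² − (q₂²+t₂)p₂ + θ₂q₂ + p₁p₂ + K/(t₂−t₁)`, with
`K = (p₁(q₁−q₂)−θ₁)(p₂(q₂−q₁)−θ₂)`, Poisson-commute: `{H₁, H₂} = 0`. -/

theorem garnier_52_11_involution (θ1 θ2 t1 t2 : ℂ) (h : t1 ≠ t2) :
    let K : (Fin 4 → ℂ) → ℂ := fun v =>
      (v 1 * (v 0 - v 2) - θ1) * (v 3 * (v 2 - v 0) - θ2)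
    let H1 : (Fin 4 → ℂ) → ℂ := fun v =>
      v 1 ^ 2 - (v 0 ^ 2 + t1) * v 1 + θ1 * v 0 + v 1 * v 3 + K v / (t1 - t2)
    let H2 : (Fin 4 → ℂ) → ℂ := fun v =>
      v 3 ^ 2 - (v 2 ^ 2 + t2) * v 3 + θ2 * v 2 + v 1 * v 3 + K v / (t2 - t1)
    ∀ v : Fin 4 → ℂ, poissonBracket H1 H2 v = 0 := by
  intro K H1 H2 v
  have h1 : t1 - t2 ≠ 0 := sub_ne_zero.2 h
  have h2 : t2 - t1 ≠ 0 := sub_ne_zero.2 h.symm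
  simp only [poissonBracket, pderiv4, K, H1, H2, Function.update_apply,
    Fin.isValue, show ((0:Fin 4) = 1) = False by decide, show ((1:Fin 4) = 0) = False by decide,
    show ((2:Fin 4) = 0) = False by decide, show ((2:Fin 4) = 1) = False by decide,
    show ((3:Fin 4) = 0) = False by decide, show ((3:Fin 4) = 1) = False by decide,
    show ((0:Fin 4) = 2) = False by decide, show ((0:Fin 4) = 3) = False by decide,
    show ((1:Fin 4) = 2) = False by decide, show ((1:Fin 4) = 3) = False by decide,
    show ((2:Fin 4) = 3) = False by decide, show ((3:Fin 4) = 2) = False by decide,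
    if_true, if_false, ite_true, ite_false, if_pos rfl]
  simp (disch := fun_prop) only [deriv_fun_add, deriv_fun_sub, deriv_fun_mul, deriv_div_const,
    deriv_fun_pow, deriv_const', deriv_id'', deriv_sub_const, deriv_const_sub,
    deriv_const_mul_field, deriv_hsub, deriv_hmul]
  field_simp
  ring
end
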